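/- Let G be the clique star 𝕂_{u,n_2,...,n_{k+1}} on n vertices as above. Then the distance Laplacian spectrum of G is {0, n, 2n−1 with multiplicity k−1, and 2n−n_i with multiplicity n_i−2 for each i = 2,...,k+1}. -/

import Mathlib

open Matrix BigOperators Polynomial
open scoped Classical

/-- The distance matrix of the clique star `𝕂_{u,n_2,…,n_{k+1}}` (cliques of sizes
`c i` sharing exactly the center vertex `none`): distance `1` to the center and within
a clique, distance `2` between different cliques. -/
noncomputable def dMatCS {k : ℕ} (c : Fin k → ℕ) :
    Matrix (Option (Σ i : Fin k, Fin (c i - 1))) (Option (Σ i : Fin k, Fin (c i - 1))) ℝ :=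
  fun x y =>
    if x = y then 0
    else match x, y with
      | none, _ => 1
      | _, none => 1
      | some a, some b => if a.1 = b.1 then 1 else 2

/-- The distance Laplacian `𝓛 = Tr - 𝓓` of the clique star, where `Tr` is the
diagonal matrix of transmissions (row sums of `𝓓`). -/
noncomputable def dLapCS {k : ℕ} (c : Fin k → ℕ) :
    Matrix (Option (Σ i : Fin k, Fin (c i - 1))) (Option (Σ i : Fin k, Fin (c i - 1))) ℝ :=
  Matrix.diagonal (fun x => ∑ y, dMatCS c x y) - dMatCS c

namespace CSP

/-! ### generic sum/prod helpers -/

lemma sum_ite_point {α : Type*} [Fintype α] [DecidableEq α] (p : α) (a b : ℝ) :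
    ∑ i : α, (if i = p then a else b) = a + ((Fintype.card α : ℝ) - 1) * b := by
  have h : ∀ i : α, (if i = p then a else b) = b + (if i = p then a - b else 0) := by
    intro i; by_cases h : i = p <;> simp [h]
  simp only [h]
  rw [Finset.sum_add_distrib, Finset.sum_const, Finset.sum_ite_eq' Finset.univ p]
  simp only [Finset.mem_univ, if_true, smul_eq_mul, Finset.card_univ]
  ring

lemma sum_ite_two_point {α : Type*} [Fintype α] [DecidableEq α] (p q : α) (hpq : p ≠ q)
    (a b : ℝ) :
    ∑ i : α, (if i = p then a else if i = q then b else 0) = a + b := by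
  have h : ∀ i : α, (if i = p then a else if i = q then b else 0)
      = (if i = p then a else 0) + (if i = q then b else 0) := by
    intro i
    by_cases h1 : i = p
    · subst h1; simp [hpq]
    · simp [h1]
  simp only [h]
  rw [Finset.sum_add_distrib, Finset.sum_ite_eq' Finset.univ p, Finset.sum_ite_eq' Finset.univ q]
  simp

lemma sum_update {α : Type*} [Fintype α] [DecidableEq α] (p : α) (A : ℝ) (g : α → ℝ) :
    ∑ i : α, (if i = p then A else g i) = (∑ i : α, g i) + A - g p := by
  have h : ∀ i : α, (if i = p then A else g i) = g i + (if i = p then A - g p else 0) := by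
    intro i; by_cases h : i = p <;> simp [h]
  simp only [h]
  rw [Finset.sum_add_distrib, Finset.sum_ite_eq' Finset.univ p]
  simp
  ring

lemma sum_ite_coef {α : Type*} [Fintype α] [DecidableEq α] (p : α) (A B : ℝ) (g : α → ℝ) :
    ∑ i : α, (if i = p then A else B) * g i = B * (∑ i : α, g i) + (A - B) * g p := by
  have h : ∀ i : α, (if i = p then A else B) * g i
      = B * g i + (if i = p then (A - B) * g i else 0) := by
    intro i; by_cases h : i = p <;> simp [h] <;> ring
  simp only [h]
  rw [Finset.sum_add_distrib, Finset.sum_ite_eq' Finset.univ p, Finset.mul_sum]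
  simp

lemma fin_sum_ite_zero (n : ℕ) (hn : n ≠ 0) (a b : ℝ) :
    ∑ t : Fin n, (if (t : ℕ) = 0 then a else b) = a + ((n : ℝ) - 1) * b := by
  have hpos : 0 < n := Nat.pos_of_ne_zero hn
  have hz : ∀ t : Fin n, ((t : ℕ) = 0) = (t = (⟨0, hpos⟩ : Fin n)) := by
    intro t; rw [Fin.ext_iff]
  simp only [hz]
  rw [sum_ite_point]
  simp

lemma fin_sum_ite_two (n : ℕ) (t : Fin n) (ht : (t : ℕ) ≠ 0) (a b : ℝ) :
    ∑ s : Fin n, (if (s : ℕ) = (t : ℕ) then a else if (s : ℕ) = 0 then b else 0) = a + b := by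
  have hpos : 0 < n := t.pos
  have hz : ∀ s : Fin n, ((s : ℕ) = 0) = (s = (⟨0, hpos⟩ : Fin n)) := by
    intro s; rw [Fin.ext_iff]
  have hts : ∀ s : Fin n, ((s : ℕ) = (t : ℕ)) = (s = t) := by
    intro s; rw [Fin.ext_iff]
  simp only [hz, hts]
  refine sum_ite_two_point t ⟨0, hpos⟩ ?_ a b
  intro h
  exact ht (by simpa using congrArg Fin.val h)

lemma fin_sum_ite_single (n : ℕ) (t : Fin n) (g : Fin n → ℝ) :
    ∑ s : Fin n, (if (s : ℕ) = (t : ℕ) then g s else 0) = g t := by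
  have hts : ∀ s : Fin n, ((s : ℕ) = (t : ℕ)) = (s = t) := by
    intro s; rw [Fin.ext_iff]
  simp only [hts]
  rw [Finset.sum_ite_eq' Finset.univ t]
  simp

lemma prod_ite_point {α : Type*} [Fintype α] [DecidableEq α] (p : α) (a b : ℝ[X]) :
    ∏ i : α, (if i = p then a else b) = a * b ^ (Fintype.card α - 1) := by
  rw [← Finset.mul_prod_erase Finset.univ _ (Finset.mem_univ p)]
  simp only [if_pos rfl]
  congr 1
  rw [Finset.prod_congr rfl (fun i hi => ?_), Finset.prod_const, Finset.card_erase_of_mem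
    (Finset.mem_univ p), Finset.card_univ]
  rw [if_neg (Finset.ne_of_mem_erase hi)]

lemma fin_prod_ite_zero (n : ℕ) (hn : n ≠ 0) (a b : ℝ[X]) :
    ∏ t : Fin n, (if (t : ℕ) = 0 then a else b) = a * b ^ (n - 1) := by
  have hpos : 0 < n := Nat.pos_of_ne_zero hn
  have hz : ∀ t : Fin n, ((t : ℕ) = 0) = (t = (⟨0, hpos⟩ : Fin n)) := by
    intro t; rw [Fin.ext_iff]
  simp only [hz]
  rw [prod_ite_point]
  simp

end CSP

namespace CSP

variable {k : ℕ} (c : Fin k → ℕ) (i0 : Fin k) (Nr : ℝ)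

/-- clique sizes minus one, as reals -/
noncomputable def mr (i : Fin k) : ℝ := ((c i - 1 : ℕ) : ℝ)

/-- the eigenvalues -/
noncomputable def evCS : Option (Σ i : Fin k, Fin (c i - 1)) → ℝ := fun x =>
  match x with
  | none => 0
  | some ⟨i, t⟩ => if (t : ℕ) = 0 then (if i = i0 then Nr else 2 * Nr - 1)
      else 2 * Nr - (c i : ℝ)

/-- the eigenvector matrix (columns are eigenvectors) -/
noncomputable def PCS : Matrix (Option (Σ i : Fin k, Fin (c i - 1)))
    (Option (Σ i : Fin k, Fin (c i - 1))) ℝ := fun x y =>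
  match x, y with
  | _, none => 1
  | none, some ⟨i, t⟩ => if (t : ℕ) = 0 ∧ i = i0 then Nr - 1 else 0
  | some ⟨j, _s⟩, some ⟨i, t⟩ =>
      if (t : ℕ) = 0 then
        if i = i0 then -1
        else if j = i then mr c i0 else if j = i0 then -(mr c i) else 0
      else
        if j = i then
          (if (_s : ℕ) = (t : ℕ) then 1 else if (_s : ℕ) = 0 then -1 else 0)
        else 0

/-- the inverse of `PCS` -/
noncomputable def QCS : Matrix (Option (Σ i : Fin k, Fin (c i - 1)))
    (Option (Σ i : Fin k, Fin (c i - 1))) ℝ := fun x y =>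
  match x, y with
  | none, _ => 1 / Nr
  | some ⟨i, t⟩, none =>
      if (t : ℕ) = 0 ∧ i = i0 then 1 / Nr else 0
  | some ⟨i, t⟩, some ⟨j, _s⟩ =>
      if (t : ℕ) = 0 then
        if i = i0 then -(1 / (Nr * (Nr - 1)))
        else (1 / mr c i0) * (if j = i then 1 / mr c i - 1 / (Nr - 1) else -(1 / (Nr - 1)))
      else
        if j = i then
          (if (_s : ℕ) = (t : ℕ) then 1 - 1 / mr c i else -(1 / mr c i))
        else 0

/-- splitting a sum over the vertex set -/
lemma sumIdx (f : Option (Σ i : Fin k, Fin (c i - 1)) → ℝ) :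
    ∑ z, f z = f none + ∑ j, ∑ t, f (some ⟨j, t⟩) := by
  rw [Fintype.sum_option, ← Finset.univ_sigma_univ, Finset.sum_sigma]

section lemmas
lemma mr_ne (hc : ∀ i, 2 ≤ c i) (i : Fin k) : mr c i ≠ 0 := by
  have := hc i
  have h1 : 1 ≤ c i - 1 := by omega
  simp only [mr]
  exact Nat.cast_ne_zero.mpr (by omega)

lemma mr_ge_one (hc : ∀ i, 2 ≤ c i) (i : Fin k) : (1 : ℝ) ≤ mr c i := by
  have := hc i
  simp only [mr]
  exact_mod_cast Nat.one_le_iff_ne_zero.mpr (by omega)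

/-! ### column sums of `PCS` over one clique -/

lemma cs_none (j : Fin k) :
    ∑ t : Fin (c j - 1), PCS c i0 Nr (some ⟨j, t⟩) none = mr c j := by
  simp [PCS, mr, Finset.sum_const]

lemma cs_g {i : Fin k} (j : Fin k) (t : Fin (c i - 1)) (ht : (t : ℕ) = 0) (hi : i = i0) :
    ∑ s : Fin (c j - 1), PCS c i0 Nr (some ⟨j, s⟩) (some ⟨i, t⟩) = -(mr c j) := by
  simp [PCS, ht, hi, mr, Finset.sum_const]

lemma cs_w {i : Fin k} (j : Fin k) (t : Fin (c i - 1)) (ht : (t : ℕ) = 0) (hi : i ≠ i0) :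
    ∑ s : Fin (c j - 1), PCS c i0 Nr (some ⟨j, s⟩) (some ⟨i, t⟩)
      = if j = i then mr c i * mr c i0 else if j = i0 then -(mr c i0 * mr c i) else 0 := by
  have hii : i0 ≠ i := fun h => hi h.symm
  by_cases h1 : j = i
  · subst h1
    simp [PCS, ht, hi, mr, Finset.sum_const]
  · by_cases h2 : j = i0
    · subst h2
      simp [PCS, ht, hi, h1, hii, mr, Finset.sum_const]
    · simp [PCS, ht, hi, h1, h2, mr, Finset.sum_const]

lemma cs_d {i : Fin k} (j : Fin k) (t : Fin (c i - 1)) (ht : (t : ℕ) ≠ 0) :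
    ∑ s : Fin (c j - 1), PCS c i0 Nr (some ⟨j, s⟩) (some ⟨i, t⟩) = 0 := by
  by_cases h : j = i
  · subst h
    simp only [PCS, ht, if_false, if_pos rfl, if_true, ite_false, ite_true]
    rw [show ((-1 : ℝ)) = (-1 : ℝ) from rfl] -- noop
    rw [fin_sum_ite_two _ t ht 1 (-1)]
    ring
  · simp [PCS, ht, h]

/-! ### full column sums of `PCS` -/

variable (hcard : Nr = 1 + ∑ i, mr c i)
include hcard

lemma colsum_none : ∑ z, PCS c i0 Nr z none = Nr := by
  rw [sumIdx, Finset.sum_congr rfl (fun j _ => cs_none c i0 Nr j)]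
  have : PCS c i0 Nr none none = 1 := by simp [PCS]
  rw [this, hcard]

lemma colsum_g {i : Fin k} (t : Fin (c i - 1)) (ht : (t : ℕ) = 0) (hi : i = i0) :
    ∑ z, PCS c i0 Nr z (some ⟨i, t⟩) = 0 := by
  rw [sumIdx, Finset.sum_congr rfl (fun j _ => cs_g c i0 Nr j t ht hi)]
  have : PCS c i0 Nr none (some ⟨i, t⟩) = Nr - 1 := by simp [PCS, ht, hi]
  rw [this, Finset.sum_neg_distrib]
  have h2 : ∑ j, mr c j = Nr - 1 := by rw [hcard]; ring
  rw [h2]; ring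

lemma colsum_w {i : Fin k} (t : Fin (c i - 1)) (ht : (t : ℕ) = 0) (hi : i ≠ i0) :
    ∑ z, PCS c i0 Nr z (some ⟨i, t⟩) = 0 := by
  rw [sumIdx, Finset.sum_congr rfl (fun j _ => cs_w c i0 Nr j t ht hi)]
  have : PCS c i0 Nr none (some ⟨i, t⟩) = 0 := by simp [PCS, ht, hi]
  rw [this, sum_ite_two_point i i0 hi]
  ring

lemma colsum_d {i : Fin k} (t : Fin (c i - 1)) (ht : (t : ℕ) ≠ 0) :
    ∑ z, PCS c i0 Nr z (some ⟨i, t⟩) = 0 := by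
  rw [sumIdx, Finset.sum_congr rfl (fun j _ => cs_d c i0 Nr j t ht)]
  have : PCS c i0 Nr none (some ⟨i, t⟩) = 0 := by simp [PCS, ht]
  rw [this]
  simp


/-! ### sums of `PCS` over all non-center vertices -/

lemma tot_none : ∑ j, ∑ t : Fin (c j - 1), PCS c i0 Nr (some ⟨j, t⟩) none = Nr - 1 := by
  rw [Finset.sum_congr rfl (fun j _ => cs_none c i0 Nr j), hcard]
  ring

omit hcard in
lemma tot_g {i : Fin k} (t : Fin (c i - 1)) (ht : (t : ℕ) = 0) (hi : i = i0) :
    ∑ j, ∑ s : Fin (c j - 1), PCS c i0 Nr (some ⟨j, s⟩) (some ⟨i, t⟩)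
      = -(∑ j, mr c j) := by
  rw [Finset.sum_congr rfl (fun j _ => cs_g c i0 Nr j t ht hi)]
  simp

omit hcard in
lemma tot_w {i : Fin k} (t : Fin (c i - 1)) (ht : (t : ℕ) = 0) (hi : i ≠ i0) :
    ∑ j, ∑ s : Fin (c j - 1), PCS c i0 Nr (some ⟨j, s⟩) (some ⟨i, t⟩) = 0 := by
  rw [Finset.sum_congr rfl (fun j _ => cs_w c i0 Nr j t ht hi),
    sum_ite_two_point i i0 hi]
  ring

omit hcard in
lemma tot_d {i : Fin k} (t : Fin (c i - 1)) (ht : (t : ℕ) ≠ 0) :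
    ∑ j, ∑ s : Fin (c j - 1), PCS c i0 Nr (some ⟨j, s⟩) (some ⟨i, t⟩) = 0 := by
  rw [Finset.sum_congr rfl (fun j _ => cs_d c i0 Nr j t ht)]
  simp

lemma sum_mr : ∑ j, mr c j = Nr - 1 := by rw [hcard]; ring


omit hcard in
lemma some_ne_fst {i i' : Fin k} (h : i ≠ i') (t : Fin (c i - 1)) (t' : Fin (c i' - 1)) :
    (some ⟨i, t⟩ : Option (Σ j : Fin k, Fin (c j - 1))) ≠ some ⟨i', t'⟩ := by
  simp only [ne_eq, Option.some.injEq]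
  intro h2
  exact h (congrArg Sigma.fst h2)

omit hcard in
lemma some_ne_snd' {i : Fin k} {t t' : Fin (c i - 1)} (h : (t : ℕ) ≠ (t' : ℕ)) :
    (some ⟨i, t⟩ : Option (Σ j : Fin k, Fin (c j - 1))) ≠ some ⟨i, t'⟩ := by
  intro h2
  have h3 : (⟨i, t⟩ : Σ j : Fin k, Fin (c j - 1)) = ⟨i, t'⟩ := Option.some_injective _ h2
  exact h (by cases h3; rfl)

omit hcard in
lemma some_ne_gen {i i' : Fin k} {t : Fin (c i - 1)} {t' : Fin (c i' - 1)}
    (h : i = i' → (t : ℕ) ≠ (t' : ℕ)) :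
    (some ⟨i, t⟩ : Option (Σ j : Fin k, Fin (c j - 1))) ≠ some ⟨i', t'⟩ := by
  by_cases hii : i = i'
  · subst hii
    exact some_ne_snd' c (h rfl)
  · exact some_ne_fst c hii t t'

/-! ### `QCS` is a left inverse of `PCS` -/

theorem QP_one (hm : ∀ i, mr c i ≠ 0) (hN0 : Nr ≠ 0) (hN1 : Nr - 1 ≠ 0) :
    QCS c i0 Nr * PCS c i0 Nr = 1 := by
  have hsmr := sum_mr c Nr hcard
  ext x y
  rw [Matrix.mul_apply, sumIdx c (fun z => QCS c i0 Nr x z * PCS c i0 Nr z y)]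
  rcases x with _ | ⟨i, t⟩
  · -- row `none`
    have hQ : ∀ (j : Fin k) (s : Fin (c j - 1)),
        QCS c i0 Nr none (some ⟨j, s⟩) = 1 / Nr := fun j s => rfl
    have hQn : QCS c i0 Nr none none = 1 / Nr := rfl
    simp only [hQ, hQn, ← Finset.mul_sum]
    rcases y with _ | ⟨i, t⟩
    · rw [tot_none c i0 Nr hcard]
      have : PCS c i0 Nr none none = 1 := rfl
      rw [this, Matrix.one_apply_eq]
      field_simp
      ring
    · rw [Matrix.one_apply_ne (by simp)]
      by_cases ht : (t : ℕ) = 0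
      · by_cases hi : i = i0
        · rw [tot_g c i0 Nr t ht hi, hsmr]
          have : PCS c i0 Nr none (some ⟨i, t⟩) = Nr - 1 := by simp [PCS, ht, hi]
          rw [this]
          ring
        · rw [tot_w c i0 Nr t ht hi]
          have : PCS c i0 Nr none (some ⟨i, t⟩) = 0 := by simp [PCS, ht, hi]
          rw [this]
          ring
      · rw [tot_d c i0 Nr t ht]
        have : PCS c i0 Nr none (some ⟨i, t⟩) = 0 := by simp [PCS, ht]
        rw [this]
        ring
  · by_cases ht : (t : ℕ) = 0
    · by_cases hi : i = i0
      · -- row `g`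
        have hQ : ∀ (j : Fin k) (s : Fin (c j - 1)),
            QCS c i0 Nr (some ⟨i, t⟩) (some ⟨j, s⟩) = -(1 / (Nr * (Nr - 1))) := by
          intro j s; simp [QCS, ht, hi]
        have hQn : QCS c i0 Nr (some ⟨i, t⟩) none = 1 / Nr := by simp [QCS, ht, hi]
        simp only [hQ, hQn, ← Finset.mul_sum]
        rcases y with _ | ⟨i', t'⟩
        · rw [tot_none c i0 Nr hcard, Matrix.one_apply_ne (by simp)]
          have : PCS c i0 Nr none none = 1 := rfl
          rw [this]
          field_simp
          ring
        · by_cases ht' : (t' : ℕ) = 0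
          · by_cases hi' : i' = i0
            · -- x = y here
              have hii : i = i' := hi.trans hi'.symm
              subst hii
              have htt : t = t' := Fin.ext (by rw [ht, ht'])
              subst htt
              rw [Matrix.one_apply_eq, tot_g c i0 Nr t ht hi, hsmr]
              have : PCS c i0 Nr none (some ⟨i, t⟩) = Nr - 1 := by simp [PCS, ht, hi]
              rw [this]
              field_simp
              ring
            · rw [tot_w c i0 Nr t' ht' hi']
              have h1 : PCS c i0 Nr none (some ⟨i', t'⟩) = 0 := by simp [PCS, ht', hi']
              rw [h1, Matrix.one_apply_ne
                (some_ne_fst c (fun h : i = i' => hi' (h ▸ hi)) t t')]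
              ring
          · rw [tot_d c i0 Nr t' ht']
            have h1 : PCS c i0 Nr none (some ⟨i', t'⟩) = 0 := by simp [PCS, ht']
            rw [h1, Matrix.one_apply_ne
              (some_ne_gen c (fun _ => by rw [ht]; exact fun h => ht' h.symm))]
            ring
      · -- row `w`
        have hQ : ∀ (j : Fin k) (s : Fin (c j - 1)),
            QCS c i0 Nr (some ⟨i, t⟩) (some ⟨j, s⟩)
              = if j = i then 1 / mr c i0 * (1 / mr c i - 1 / (Nr - 1))
                else 1 / mr c i0 * (-(1 / (Nr - 1))) := by
          intro j s
          by_cases h : j = i <;> simp [QCS, ht, hi, h]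
        have hQn : QCS c i0 Nr (some ⟨i, t⟩) none = 0 := by simp [QCS, ht, hi]
        simp only [hQ, hQn, ← Finset.mul_sum, zero_mul, zero_add]
        rw [sum_ite_coef i _ _ (fun j => ∑ s, PCS c i0 Nr (some ⟨j, s⟩) y)]
        rcases y with _ | ⟨i', t'⟩
        · rw [tot_none c i0 Nr hcard, cs_none c i0 Nr i,
            Matrix.one_apply_ne (by simp)]
          field_simp [hm i, hm i0, hN1]
          ring
        · by_cases ht' : (t' : ℕ) = 0
          · by_cases hi' : i' = i0
            · rw [tot_g c i0 Nr t' ht' hi', hsmr, cs_g c i0 Nr i t' ht' hi',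
                Matrix.one_apply_ne (some_ne_fst c (fun h => hi (h.trans hi')) t t')]
              field_simp [hm i, hm i0, hN1]
              ring
            · rw [tot_w c i0 Nr t' ht' hi', cs_w c i0 Nr i t' ht' hi']
              by_cases hii : i = i'
              · subst hii
                have htt : t = t' := Fin.ext (by rw [ht, ht'])
                subst htt
                rw [Matrix.one_apply_eq, if_pos rfl]
                field_simp [hm i, hm i0, hN1]
                ring
              · rw [if_neg hii, if_neg hi,
                  Matrix.one_apply_ne (some_ne_fst c hii t t')]
                ring
          · rw [tot_d c i0 Nr t' ht', cs_d c i0 Nr i t' ht',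
              Matrix.one_apply_ne (some_ne_gen c (fun _ h => ht' (h ▸ ht)))]
            ring
    · -- row `d`
      have hQn : QCS c i0 Nr (some ⟨i, t⟩) none = 0 := by simp [QCS, ht]
      have hsplit : ∀ j : Fin k, (∑ s : Fin (c j - 1),
          QCS c i0 Nr (some ⟨i, t⟩) (some ⟨j, s⟩) * PCS c i0 Nr (some ⟨j, s⟩) y)
          = if j = i then (∑ s : Fin (c i - 1),
              QCS c i0 Nr (some ⟨i, t⟩) (some ⟨i, s⟩) * PCS c i0 Nr (some ⟨i, s⟩) y)
            else 0 := by
        intro j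
        by_cases h : j = i
        · subst h; rw [if_pos rfl]
        · rw [if_neg h]
          refine Finset.sum_eq_zero fun s _ => ?_
          have hq0 : QCS c i0 Nr (some ⟨i, t⟩) (some ⟨j, s⟩) = 0 := by
            simp [QCS, ht, h]
          rw [hq0, zero_mul]
      rw [Finset.sum_congr rfl (fun j _ => hsplit j),
        Finset.sum_ite_eq' Finset.univ i, hQn]
      simp only [Finset.mem_univ, if_true, zero_mul, zero_add]
      have hQs : ∀ s : Fin (c i - 1), QCS c i0 Nr (some ⟨i, t⟩) (some ⟨i, s⟩)
          = (if (s : ℕ) = (t : ℕ) then (1 : ℝ) else 0) - 1 / mr c i := by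
        intro s
        by_cases hs : (s : ℕ) = (t : ℕ) <;> simp [QCS, ht, hs]
      simp only [hQs, sub_mul, ite_mul, one_mul, zero_mul]
      rw [Finset.sum_sub_distrib, fin_sum_ite_single _ t
        (fun s => PCS c i0 Nr (some ⟨i, s⟩) y), ← Finset.mul_sum]
      rcases y with _ | ⟨i', t'⟩
      · rw [cs_none c i0 Nr i, Matrix.one_apply_ne (by simp)]
        have hp : PCS c i0 Nr (some ⟨i, t⟩) none = 1 := rfl
        rw [hp]
        field_simp [hm i]
        ring
      · by_cases ht' : (t' : ℕ) = 0
        · by_cases hi' : i' = i0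
          · rw [cs_g c i0 Nr i t' ht' hi',
              Matrix.one_apply_ne (some_ne_gen c (fun _ h => ht (h.trans ht')))]
            have hp : PCS c i0 Nr (some ⟨i, t⟩) (some ⟨i', t'⟩) = -1 := by
              simp [PCS, ht', hi']
            rw [hp]
            field_simp [hm i]
            ring
          · rw [cs_w c i0 Nr i t' ht' hi',
              Matrix.one_apply_ne (some_ne_gen c (fun _ h => ht (h.trans ht')))]
            by_cases hii : i = i'
            · subst hii
              have hp : PCS c i0 Nr (some ⟨i, t⟩) (some ⟨i, t'⟩) = mr c i0 := by
                simp [PCS, ht', hi']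
              rw [hp, if_pos rfl]
              field_simp [hm i, hm i0]
              ring
            · by_cases hi0 : i = i0
              · have hii2 : i0 ≠ i' := fun h => hii (hi0.trans h)
                have hp : PCS c i0 Nr (some ⟨i, t⟩) (some ⟨i', t'⟩) = -(mr c i') := by
                  simp [PCS, ht', hi', hii, hi0, hii2]
                rw [hp, if_neg hii, if_pos hi0]
                field_simp [hm i, hm i0]
                rw [hi0]
                ring
              · have hp : PCS c i0 Nr (some ⟨i, t⟩) (some ⟨i', t'⟩) = 0 := by
                  simp [PCS, ht', hi', hii, hi0]
                rw [hp, if_neg hii, if_neg hi0]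
                ring
        · rw [cs_d c i0 Nr i t' ht']
          by_cases hii : i = i'
          · subst hii
            by_cases htt : (t : ℕ) = (t' : ℕ)
            · have heq : t = t' := Fin.ext htt
              subst heq
              rw [Matrix.one_apply_eq]
              have hp : PCS c i0 Nr (some ⟨i, t⟩) (some ⟨i, t⟩) = 1 := by
                simp [PCS, ht']
              rw [hp]
              ring
            · rw [Matrix.one_apply_ne (some_ne_snd' c htt)]
              have hp : PCS c i0 Nr (some ⟨i, t⟩) (some ⟨i, t'⟩) = 0 := by
                simp [PCS, ht', ht, htt]
              rw [hp]
              ring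
          · rw [Matrix.one_apply_ne (some_ne_fst c hii t t')]
            have hp : PCS c i0 Nr (some ⟨i, t⟩) (some ⟨i', t'⟩) = 0 := by
              simp [PCS, ht', hii]
            rw [hp]
            ring

/-! ### entries of the distance matrix -/

omit hcard in
lemma dM_nn : dMatCS c none none = 0 := by simp [dMatCS]

omit hcard in
lemma dM_ns (w : Σ j : Fin k, Fin (c j - 1)) : dMatCS c none (some w) = 1 := by
  simp [dMatCS]

omit hcard in
lemma dM_sn (w : Σ j : Fin k, Fin (c j - 1)) : dMatCS c (some w) none = 1 := by
  simp [dMatCS]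

omit hcard in
lemma dM_ss_same (j : Fin k) (s t : Fin (c j - 1)) :
    dMatCS c (some ⟨j, s⟩) (some ⟨j, t⟩) = if s = t then 0 else 1 := by
  by_cases h : s = t
  · subst h; simp [dMatCS]
  · have hne : (some ⟨j, s⟩ : Option (Σ j : Fin k, Fin (c j - 1))) ≠ some ⟨j, t⟩ :=
      some_ne_snd' c (fun hv => h (Fin.ext hv))
    simp [dMatCS, hne, h]

omit hcard in
lemma dM_ss_diff {j i : Fin k} (h : j ≠ i) (s : Fin (c j - 1)) (t : Fin (c i - 1)) :
    dMatCS c (some ⟨j, s⟩) (some ⟨i, t⟩) = 2 := by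
  have hne := some_ne_fst c h s t
  simp [dMatCS, hne, h]

/-! ### transmissions -/

lemma trans_none : ∑ z, dMatCS c none z = Nr - 1 := by
  rw [sumIdx, dM_nn]
  have h : ∀ j : Fin k, ∑ t : Fin (c j - 1), dMatCS c none (some ⟨j, t⟩) = mr c j := by
    intro j
    simp [dM_ns, mr, Finset.sum_const]
  rw [Finset.sum_congr rfl (fun j _ => h j), sum_mr c Nr hcard]
  ring

lemma trans_some (j : Fin k) (s : Fin (c j - 1)) :
    ∑ z, dMatCS c (some ⟨j, s⟩) z = 2 * Nr - 2 - mr c j := by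
  rw [sumIdx, dM_sn]
  have h : ∀ i : Fin k, ∑ t : Fin (c i - 1), dMatCS c (some ⟨j, s⟩) (some ⟨i, t⟩)
      = if i = j then mr c j - 1 else 2 * mr c i := by
    intro i
    by_cases hij : i = j
    · subst hij
      rw [if_pos rfl]
      have hpt : ∀ t : Fin (c i - 1), dMatCS c (some ⟨i, s⟩) (some ⟨i, t⟩)
          = 1 - (if (t : ℕ) = (s : ℕ) then (1 : ℝ) else 0) := by
        intro t
        rw [dM_ss_same]
        by_cases hts : s = t
        · subst hts; simp
        · rw [if_neg hts, if_neg (fun hv => hts (Fin.ext hv.symm))]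
          ring
      simp only [hpt]
      rw [Finset.sum_sub_distrib, fin_sum_ite_single _ s (fun _ => (1 : ℝ))]
      simp [mr, Finset.sum_const]
    · rw [if_neg hij]
      have hji : j ≠ i := fun hh => hij hh.symm
      simp [dM_ss_diff c hji, mr, Finset.sum_const]
      ring
  rw [Finset.sum_congr rfl (fun i _ => h i), sum_update j _ _]
  have h2 : ∑ i, 2 * mr c i = 2 * (Nr - 1) := by
    rw [← Finset.mul_sum, sum_mr c Nr hcard]
  rw [h2]
  ring

/-! ### the eigenvector equation -/

theorem LP_eq (hc : ∀ i, 2 ≤ c i) :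
    dLapCS c * PCS c i0 Nr = PCS c i0 Nr * Matrix.diagonal (evCS c i0 Nr) := by
  have hsmr := sum_mr c Nr hcard
  have hmrc : ∀ i, mr c i = (c i : ℝ) - 1 := by
    intro i
    have := hc i
    simp only [mr]
    push_cast [Nat.cast_sub (by omega : 1 ≤ c i)]
    ring
  ext x y
  rw [Matrix.mul_diagonal]
  simp only [dLapCS]
  rw [Matrix.sub_mul, Matrix.sub_apply,
    Matrix.diagonal_mul, Matrix.mul_apply,
    sumIdx c (fun z => dMatCS c x z * PCS c i0 Nr z y)]
  rcases x with _ | ⟨j, s⟩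
  · rw [trans_none c Nr hcard, dM_nn, zero_mul, zero_add]
    have h : ∀ (i : Fin k) (t : Fin (c i - 1)),
        dMatCS c none (some ⟨i, t⟩) * PCS c i0 Nr (some ⟨i, t⟩) y
          = PCS c i0 Nr (some ⟨i, t⟩) y := by
      intro i t; rw [dM_ns, one_mul]
    simp only [h]
    rcases y with _ | ⟨i, t⟩
    · rw [tot_none c i0 Nr hcard]
      have h1 : PCS c i0 Nr none none = 1 := rfl
      have h2 : evCS c i0 Nr none = 0 := rfl
      rw [h1, h2]
      ring
    · by_cases ht : (t : ℕ) = 0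
      · by_cases hi : i = i0
        · rw [tot_g c i0 Nr t ht hi, hsmr]
          have h1 : PCS c i0 Nr none (some ⟨i, t⟩) = Nr - 1 := by simp [PCS, ht, hi]
          have h2 : evCS c i0 Nr (some ⟨i, t⟩) = Nr := by simp [evCS, ht, hi]
          rw [h1, h2]
          ring
        · rw [tot_w c i0 Nr t ht hi]
          have h1 : PCS c i0 Nr none (some ⟨i, t⟩) = 0 := by simp [PCS, ht, hi]
          rw [h1]
          ring
      · rw [tot_d c i0 Nr t ht]
        have h1 : PCS c i0 Nr none (some ⟨i, t⟩) = 0 := by simp [PCS, ht]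
        rw [h1]
        ring
  · rw [trans_some c Nr hcard j s, dM_sn, one_mul]
    have h : ∀ i : Fin k, ∑ t : Fin (c i - 1),
        dMatCS c (some ⟨j, s⟩) (some ⟨i, t⟩) * PCS c i0 Nr (some ⟨i, t⟩) y
        = if i = j then ((∑ t : Fin (c j - 1), PCS c i0 Nr (some ⟨j, t⟩) y)
            - PCS c i0 Nr (some ⟨j, s⟩) y)
          else 2 * ∑ t : Fin (c i - 1), PCS c i0 Nr (some ⟨i, t⟩) y := by
      intro i
      by_cases hij : i = j
      · subst hij
        rw [if_pos rfl]
        have hpt : ∀ t : Fin (c i - 1),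
            dMatCS c (some ⟨i, s⟩) (some ⟨i, t⟩) * PCS c i0 Nr (some ⟨i, t⟩) y
            = PCS c i0 Nr (some ⟨i, t⟩) y
              - (if (t : ℕ) = (s : ℕ) then PCS c i0 Nr (some ⟨i, t⟩) y else 0) := by
          intro t
          rw [dM_ss_same]
          by_cases hts : s = t
          · subst hts; simp
          · rw [if_neg hts, if_neg (fun hv => hts (Fin.ext hv.symm))]
            ring
        simp only [hpt]
        rw [Finset.sum_sub_distrib,
          fin_sum_ite_single _ s (fun t => PCS c i0 Nr (some ⟨i, t⟩) y)]
      · rw [if_neg hij]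
        have hji : j ≠ i := fun hh => hij hh.symm
        have hdm : ∀ t : Fin (c i - 1),
            dMatCS c (some ⟨j, s⟩) (some ⟨i, t⟩) * PCS c i0 Nr (some ⟨i, t⟩) y
            = 2 * PCS c i0 Nr (some ⟨i, t⟩) y := by
          intro t; rw [dM_ss_diff c hji]
        simp only [hdm]
        rw [← Finset.mul_sum]
    rw [Finset.sum_congr rfl (fun i _ => h i), sum_update j _ _]
    have h2 : ∑ i, 2 * (∑ t : Fin (c i - 1), PCS c i0 Nr (some ⟨i, t⟩) y)
        = 2 * ∑ i, ∑ t : Fin (c i - 1), PCS c i0 Nr (some ⟨i, t⟩) y :=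
      (Finset.mul_sum _ _ _).symm
    rw [h2]
    rcases y with _ | ⟨i, t⟩
    · rw [tot_none c i0 Nr hcard, cs_none c i0 Nr j]
      have h1 : PCS c i0 Nr none none = 1 := rfl
      have h3 : PCS c i0 Nr (some ⟨j, s⟩) none = 1 := rfl
      have h4 : evCS c i0 Nr none = 0 := rfl
      rw [h1, h3, h4]
      ring
    · by_cases ht : (t : ℕ) = 0
      · by_cases hi : i = i0
        · rw [tot_g c i0 Nr t ht hi, hsmr, cs_g c i0 Nr j t ht hi]
          have h1 : PCS c i0 Nr none (some ⟨i, t⟩) = Nr - 1 := by simp [PCS, ht, hi]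
          have h3 : PCS c i0 Nr (some ⟨j, s⟩) (some ⟨i, t⟩) = -1 := by simp [PCS, ht, hi]
          have h4 : evCS c i0 Nr (some ⟨i, t⟩) = Nr := by simp [evCS, ht, hi]
          rw [h1, h3, h4]
          ring
        · rw [tot_w c i0 Nr t ht hi, cs_w c i0 Nr j t ht hi]
          have h1 : PCS c i0 Nr none (some ⟨i, t⟩) = 0 := by simp [PCS, ht, hi]
          have h4 : evCS c i0 Nr (some ⟨i, t⟩) = 2 * Nr - 1 := by simp [evCS, ht, hi]
          rw [h1, h4]
          by_cases hji : j = i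
          · subst hji
            have h3 : PCS c i0 Nr (some ⟨j, s⟩) (some ⟨j, t⟩) = mr c i0 := by
              simp [PCS, ht, hi]
            rw [h3, if_pos rfl]
            ring
          · by_cases hj0 : j = i0
            · have hii2 : i0 ≠ i := fun hh => hi hh.symm
              have h3 : PCS c i0 Nr (some ⟨j, s⟩) (some ⟨i, t⟩) = -(mr c i) := by
                simp [PCS, ht, hi, hji, hj0, hii2]
              rw [h3, if_neg hji, if_pos hj0, hj0]
              ring
            · have h3 : PCS c i0 Nr (some ⟨j, s⟩) (some ⟨i, t⟩) = 0 := by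
                simp [PCS, ht, hi, hji, hj0]
              rw [h3, if_neg hji, if_neg hj0]
              ring
      · rw [tot_d c i0 Nr t ht, cs_d c i0 Nr j t ht]
        have h1 : PCS c i0 Nr none (some ⟨i, t⟩) = 0 := by simp [PCS, ht]
        have h4 : evCS c i0 Nr (some ⟨i, t⟩) = 2 * Nr - (c i : ℝ) := by simp [evCS, ht]
        rw [h1, h4]
        by_cases hji : j = i
        · subst hji
          by_cases hts : (s : ℕ) = (t : ℕ)
          · have h3 : PCS c i0 Nr (some ⟨j, s⟩) (some ⟨j, t⟩) = 1 := by
              simp [PCS, ht, hts]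
            rw [h3, hmrc j]
            ring
          · by_cases hs0 : (s : ℕ) = 0
            · have ht0 : (0 : ℕ) ≠ (t : ℕ) := fun hh => ht hh.symm
              have h3 : PCS c i0 Nr (some ⟨j, s⟩) (some ⟨j, t⟩) = -1 := by
                simp [PCS, ht, hts, hs0, ht0]
              rw [h3, hmrc j]
              ring
            · have h3 : PCS c i0 Nr (some ⟨j, s⟩) (some ⟨j, t⟩) = 0 := by
                simp [PCS, ht, hts, hs0]
              rw [h3]
              ring
        · have h3 : PCS c i0 Nr (some ⟨j, s⟩) (some ⟨i, t⟩) = 0 := by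
            simp [PCS, ht, hji]
          rw [h3]
          ring

end lemmas

section charpoly
variable {n : Type*} [Fintype n] [DecidableEq n] {R : Type*} [CommRing R]

lemma charpoly_similar (P Q L D : Matrix n n R) (hPQ : P * Q = 1) (hLP : L * P = P * D) :
    L.charpoly = D.charpoly := by
  have hQP : Q * P = 1 := mul_eq_one_comm.mp hPQ
  have hL' : L = P * D * Q := by
    calc L = L * (P * Q) := by rw [hPQ, mul_one]
    _ = L * P * Q := by rw [mul_assoc]
    _ = P * D * Q := by rw [hLP]
  set f : Matrix n n R →+* Matrix n n R[X] := (C : R →+* R[X]).mapMatrix with hf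
  have hone : f (1 : Matrix n n R) = 1 := map_one f
  have hcomm : ∀ M : Matrix n n R[X],
      M * Matrix.scalar n (X : R[X]) = Matrix.scalar n (X : R[X]) * M := by
    intro M
    ext i j
    simp [Matrix.scalar_apply, Matrix.mul_diagonal, Matrix.diagonal_mul, mul_comm]
  have hcm : charmatrix L = f P * charmatrix D * f Q := by
    rw [charmatrix, charmatrix, hL']
    rw [_root_.map_mul f, _root_.map_mul f, Matrix.mul_sub, Matrix.sub_mul]
    congr 1
    rw [hcomm (f P), mul_assoc, ← _root_.map_mul f, hPQ, hone, mul_one]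
  rw [Matrix.charpoly, Matrix.charpoly, hcm, Matrix.det_mul, Matrix.det_mul]
  have hdet : (f P).det * (f Q).det = 1 := by
    rw [← Matrix.det_mul, ← _root_.map_mul f, hPQ, hone, Matrix.det_one]
  calc (f P).det * (charmatrix D).det * (f Q).det
      = (charmatrix D).det * ((f P).det * (f Q).det) := by ring
  _ = (charmatrix D).det := by rw [hdet, mul_one]

lemma charpoly_diag (d : n → R) :
    (Matrix.diagonal d).charpoly = ∏ i, (X - C (d i)) := by
  have h : charmatrix (Matrix.diagonal d) = Matrix.diagonal (fun i => (X : R[X]) - C (d i)) := by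
    refine Matrix.ext fun i j => ?_
    by_cases hij : i = j
    · subst hij
      rw [charmatrix_apply_eq, Matrix.diagonal_apply_eq
        (fun i => (X : R[X]) - C (d i)) i, Matrix.diagonal_apply_eq d i]
    · rw [charmatrix_apply_ne _ _ _ hij, Matrix.diagonal_apply_ne _ hij,
        Matrix.diagonal_apply_ne _ hij, map_zero, neg_zero]
  rw [Matrix.charpoly, h, Matrix.det_diagonal]

end charpoly
end CSP

open CSP in
/-- The distance Laplacian spectrum of the clique star
`𝕂_{u,n_2,…,n_{k+1}}` with clique sizes `c i ≥ 2` and `N = 1 + ∑ (c i - 1)` vertices is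
`{0, N, (2N-1)^{[k-1]}, (2N - c i)^{[c i - 2]}}`, via the characteristic polynomial. -/
theorem distLap_spectrum_cliqueStar {k : ℕ} (hk : 1 ≤ k)
    (c : Fin k → ℕ) (hc : ∀ i, 2 ≤ c i) (N : ℕ) (hN : N = 1 + ∑ i, (c i - 1)) :
    (dLapCS c).charpoly
      = X * (X - C (N : ℝ)) * (X - C (2 * (N : ℝ) - 1)) ^ (k - 1)
        * ∏ i : Fin k, (X - C (2 * (N : ℝ) - (c i : ℝ))) ^ (c i - 2) := by
  have hk0 : 0 < k := hk
  set i0 : Fin k := ⟨0, hk0⟩ with hi0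
  set Nr : ℝ := (N : ℝ) with hNr
  have hcard : Nr = 1 + ∑ i, mr c i := by
    rw [hNr, hN]
    push_cast
    simp [mr]
  have hm : ∀ i, mr c i ≠ 0 := mr_ne c hc
  have hm1 : ∀ i, (1 : ℝ) ≤ mr c i := mr_ge_one c hc
  have hN0 : Nr ≠ 0 := by
    rw [hNr]
    have : 0 < N := by omega
    exact_mod_cast this.ne'
  have hN1 : Nr - 1 ≠ 0 := by
    have h : Nr - 1 = ∑ i, mr c i := by rw [hcard]; ring
    rw [h]
    have hpos : 0 < ∑ i, mr c i :=
      Finset.sum_pos (fun i _ => lt_of_lt_of_le one_pos (hm1 i)) ⟨i0, Finset.mem_univ i0⟩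
    exact hpos.ne'
  have hQP := QP_one c i0 Nr hcard hm hN0 hN1
  have hPQ : PCS c i0 Nr * QCS c i0 Nr = 1 := mul_eq_one_comm.mp hQP
  have hLP := LP_eq c i0 Nr hcard hc
  rw [charpoly_similar (PCS c i0 Nr) (QCS c i0 Nr) (dLapCS c)
    (Matrix.diagonal (evCS c i0 Nr)) hPQ hLP, charpoly_diag]
  rw [Fintype.prod_option]
  have h0 : evCS c i0 Nr none = 0 := rfl
  rw [h0, map_zero, sub_zero, ← Finset.univ_sigma_univ, Finset.prod_sigma]
  have hinner : ∀ i : Fin k,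
      (∏ t : Fin (c i - 1), (X - C (evCS c i0 Nr (some ⟨i, t⟩))))
      = (if i = i0 then (X - C Nr) else (X - C (2 * Nr - 1)))
        * (X - C (2 * Nr - (c i : ℝ))) ^ (c i - 2) := by
    intro i
    have h1 : ∀ t : Fin (c i - 1), (X - C (evCS c i0 Nr (some ⟨i, t⟩)))
        = if (t : ℕ) = 0 then (if i = i0 then (X - C Nr) else (X - C (2 * Nr - 1)))
          else (X - C (2 * Nr - (c i : ℝ))) := by
      intro t
      by_cases ht : (t : ℕ) = 0
      · by_cases hi : i = i0 <;> simp [evCS, ht, hi]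
      · simp [evCS, ht]
    simp only [h1]
    rw [fin_prod_ite_zero _ (by have := hc i; omega)]
    congr 2 <;> omega
  rw [Finset.prod_congr rfl (fun i _ => hinner i), Finset.prod_mul_distrib,
    prod_ite_point i0 _ _]
  simp only [Fintype.card_fin]
  ring
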